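/- Let g be a Lorentzian bilinear form on V with null frame (k, ℓ, s₁,…,s_{d-1}) satisfying g(k,ℓ) = -1, g(k,k) = g(ℓ,ℓ) = 0, g(sⱼ,s_m) = δ_{jm}, and g of the sⱼ with k and ℓ zero. If h is a symmetric bilinear form with the same null cone as g, and h(k,sⱼ) = h(ℓ,sⱼ) = 0 for all j, then h(sⱼ,sⱼ) = -h(k,ℓ) for every j. -/

import Mathlib

theorem stmt_2 (d : ℕ) (hd : 2 ≤ d) (V : Type*) [AddCommGroup V] [Module ℝ V]
    (g h : V →ₗ[ℝ] V →ₗ[ℝ] ℝ)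
    (b : Module.Basis (Fin (d + 1)) ℝ V)
    (k ℓ : V) (s : Fin (d - 1) → V)
    (hk : k = b 0) (hℓ : ℓ = b 1)
    (hs : ∀ j : Fin (d - 1), s j = b ⟨j.val + 2, by have := j.isLt; omega⟩)
    (hgsymm : ∀ v w, g v w = g w v)
    (hkl : g k ℓ = -1) (hkk : g k k = 0) (hll : g ℓ ℓ = 0)
    (hss : ∀ j m, g (s j) (s m) = if j = m then (1 : ℝ) else 0)
    (hks : ∀ j, g k (s j) = 0) (hls : ∀ j, g ℓ (s j) = 0)
    (hhsymm : ∀ v w, h v w = h w v)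
    (hnull : ∀ v : V, g v v = 0 ↔ h v v = 0)
    (hhks : ∀ j, h k (s j) = 0) (hhls : ∀ j, h ℓ (s j) = 0) :
    ∀ j, h (s j) (s j) = -h k ℓ := by
  intro j
  have hkk' : h k k = 0 := (hnull k).1 hkk
  have hll' : h ℓ ℓ = 0 := (hnull ℓ).1 hll
  set v := s j + k + (1/2 : ℝ) • ℓ with hv
  have hg : g v v = 0 := by
    simp only [hv, map_add, map_smul, LinearMap.add_apply, LinearMap.smul_apply, smul_eq_mul]
    rw [hgsymm (s j) k, hgsymm (s j) ℓ, hgsymm ℓ k]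
    simp [hss, hks, hls, hkk, hll, hkl]
    norm_num
  have hh : h v v = 0 := (hnull v).1 hg
  simp only [hv, map_add, map_smul, LinearMap.add_apply, LinearMap.smul_apply, smul_eq_mul] at hh
  rw [hhsymm (s j) k, hhsymm (s j) ℓ, hhks, hhls, hkk', hll', hhsymm ℓ k] at hh
  linarith
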